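/- Let a : ℤ-valued sequence on ℕ satisfy the Perrin recurrence a(n+3) = a(n+1) + a(n) for all n. Let P : ℕ → ℤ be the Perrin sequence, P(0) = 3, P(1) = 0, P(2) = 2, P(n+3) = P(n+1) + P(n), and let c : ℕ → ℤ be defined by c(0) = −3, c(1) = 1, c(2) = −1, c(n+3) = −c(n+2) + c(n). Then for all natural numbers m and n, a(m(n+3)) = P(m) · a(m(n+2)) + c(m) · a(m(n+1)) + a(mn). -/

import Mathlib

def P : ℕ → ℤ
  | 0 => 3
  | 1 => 0
  | 2 => 2
  | (n + 3) => P (n + 1) + P n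

def c : ℕ → ℤ
  | 0 => -3
  | 1 => 1
  | 2 => -1
  | (n + 3) => -c (n + 2) + c n

namespace PerrinAux

open Matrix

abbrev Mat := Matrix (Fin 3) (Fin 3) ℤ

def Mp : Mat := !![0,1,0;0,0,1;1,1,0]
def Lp : Mat := !![-1,0,1;1,0,0;0,1,0]

set_option maxHeartbeats 1000000 in
lemma CH3' (a b c d e f g h i : ℤ) :
    (!![a,b,c;d,e,f;g,h,i] : Mat) * !![a,b,c;d,e,f;g,h,i] * !![a,b,c;d,e,f;g,h,i]
      = (a+e+i) • ((!![a,b,c;d,e,f;g,h,i] : Mat) * !![a,b,c;d,e,f;g,h,i])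
        - ((e*i-f*h) + (a*i-c*g) + (a*e-b*d)) • (!![a,b,c;d,e,f;g,h,i])
        + (a*e*i - a*f*h - b*d*i + b*f*g + c*d*h - c*e*g) • (!![1,0,0;0,1,0;0,0,1] : Mat) := by
  ext x y
  fin_cases x <;> fin_cases y <;>
    simp [Matrix.mul_apply, Fin.sum_univ_three, Matrix.vecHead, Matrix.vecTail] <;> ring

lemma CH3 (N : Mat) :
    N * N * N = N.trace • (N * N) - N.adjugate.trace • N + N.det • (1 : Mat) := by
  have h1 : N.trace = N 0 0 + N 1 1 + N 2 2 := Matrix.trace_fin_three N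
  have h2 : N.det = N 0 0 * N 1 1 * N 2 2 - N 0 0 * N 1 2 * N 2 1 - N 0 1 * N 1 0 * N 2 2
      + N 0 1 * N 1 2 * N 2 0 + N 0 2 * N 1 0 * N 2 1 - N 0 2 * N 1 1 * N 2 0 :=
    Matrix.det_fin_three N
  have h3 : N.adjugate.trace = (N 1 1 * N 2 2 - N 1 2 * N 2 1) + (N 0 0 * N 2 2 - N 0 2 * N 2 0)
      + (N 0 0 * N 1 1 - N 0 1 * N 1 0) := by
    rw [Matrix.eta_fin_three N, Matrix.adjugate_fin_three, Matrix.trace_fin_three]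
    simp
  have h4 : (1 : Mat) = !![1,0,0;0,1,0;0,0,1] := Matrix.one_fin_three
  rw [h1, h2, h3, h4]
  have := CH3' (N 0 0) (N 0 1) (N 0 2) (N 1 0) (N 1 1) (N 1 2) (N 2 0) (N 2 1) (N 2 2)
  rw [← Matrix.eta_fin_three N] at this
  exact this

lemma M3 : Mp ^ 3 = Mp + 1 := by decide
lemma L3 : Lp ^ 3 = 1 - Lp ^ 2 := by decide
lemma detMp : Mp.det = 1 := by decide
lemma adjMp : Mp.adjugate = Lp := by
  show (!![0,1,0;0,0,1;1,1,0] : Mat).adjugate = Lp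
  rw [Matrix.adjugate_fin_three]
  norm_num [Lp] <;> decide

lemma trM : ∀ m, (Mp ^ m).trace = P m := by
  have key : ∀ m, (Mp ^ m).trace = P m ∧ (Mp ^ (m+1)).trace = P (m+1) ∧
      (Mp ^ (m+2)).trace = P (m+2) := by
    intro m
    induction m with
    | zero => refine ⟨?_, ?_, ?_⟩ <;> decide
    | succ m ih =>
      obtain ⟨h0, h1, h2⟩ := ih
      refine ⟨h1, h2, ?_⟩
      have hp : Mp ^ (m+1+2) = Mp ^ (m+1) + Mp ^ m := by
        have : Mp ^ (m+1+2) = Mp ^ m * Mp ^ 3 := by rw [← pow_add]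
        rw [this, M3, mul_add, mul_one, ← pow_succ]
      rw [hp, Matrix.trace_add, h0, h1]
      show _ = P (m+3)
      rw [P]
  exact fun m => (key m).1

lemma trL : ∀ m, (Lp ^ m).trace = -c m := by
  have key : ∀ m, (Lp ^ m).trace = -c m ∧ (Lp ^ (m+1)).trace = -c (m+1) ∧
      (Lp ^ (m+2)).trace = -c (m+2) := by
    intro m
    induction m with
    | zero => refine ⟨?_, ?_, ?_⟩ <;> decide
    | succ m ih =>
      obtain ⟨h0, h1, h2⟩ := ih
      refine ⟨h1, h2, ?_⟩
      have hp : Lp ^ (m+1+2) = Lp ^ m - Lp ^ (m+2) := by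
        have : Lp ^ (m+1+2) = Lp ^ m * Lp ^ 3 := by rw [← pow_add]
        rw [this, L3, mul_sub, mul_one, ← pow_add]
      rw [hp, Matrix.trace_sub, h0, h2]
      show _ = -c (m+3)
      rw [c]
      ring
  exact fun m => (key m).1

lemma key (m : ℕ) : Mp ^ (3*m) = P m • Mp ^ (2*m) + c m • Mp ^ m + 1 := by
  have h := CH3 (Mp ^ m)
  rw [Matrix.adjugate_pow, adjMp, trM, trL, Matrix.det_pow, detMp, one_pow, one_smul,
    neg_smul, sub_neg_eq_add] at h
  have e1 : Mp ^ (3*m) = Mp ^ m * Mp ^ m * Mp ^ m := by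
    rw [mul_comm, pow_mul, pow_succ, pow_succ, pow_one]
  have e2 : Mp ^ (2*m) = Mp ^ m * Mp ^ m := by
    rw [mul_comm, pow_mul, pow_two]
  rw [e1, e2, h]

end PerrinAux

open PerrinAux Matrix in
theorem perrin_msection_recurrence
    (a : ℕ → ℤ) (ha : ∀ n : ℕ, a (n + 3) = a (n + 1) + a n) :
    ∀ m n : ℕ, a (m * (n + 3)) =
      P m * a (m * (n + 2)) + c m * a (m * (n + 1)) + a (m * n) := by
  have vec : ∀ m k : ℕ, (Mp ^ m).mulVec ![a k, a (k+1), a (k+2)]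
      = ![a (k+m), a (k+m+1), a (k+m+2)] := by
    intro m
    induction m with
    | zero => intro k; simp
    | succ m ih =>
      intro k
      have : Mp ^ (m+1) = Mp * Mp ^ m := by rw [pow_succ']
      rw [this, ← Matrix.mulVec_mulVec, ih k]
      have ha' : a (k+m+3) = a (k+m+1) + a (k+m) := ha (k+m)
      funext i
      fin_cases i <;>
        simp [Mp, Matrix.mulVec, dotProduct, Fin.sum_univ_three, ← Nat.add_assoc, ha'] <;> omega
  intro m n
  have h := congrFun (congrArg (fun N => N.mulVec ![a (m*n), a (m*n+1), a (m*n+2)]) (key m)) 0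
  simp only [Matrix.add_mulVec, Matrix.smul_mulVec, Matrix.one_mulVec, vec] at h
  have i3 : m * (n+3) = m*n + 3*m := by ring
  have i2 : m * (n+2) = m*n + 2*m := by ring
  have i1 : m * (n+1) = m*n + m := by ring
  rw [i3, i2, i1]
  simpa using h
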